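/- Sz.-Nagy dilation (coextension form): every contraction T on a Hilbert space H admits an isometric coextension; that is, there is a Hilbert space K containing H (via an isometric embedding J) and an isometry V on K such that H is coinvariant for V and the compression of V to H equals T: J* V J = T, and moreover J* Vⁿ J = Tⁿ for all n ≥ 0. -/

import Mathlib

open ContinuousLinearMap

universe u

noncomputable section SzNagyAux

variable {H : Type u} [NormedAddCommGroup H] [InnerProductSpace ℂ H] [CompleteSpace H]

/-- positivity of the defect of a contraction -/
lemma sznagy_defect_nonneg (T : H →L[ℂ] H) (hT : ‖T‖ ≤ 1) :
    (0 : H →L[ℂ] H) ≤ 1 - adjoint T * T := by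
  rw [ContinuousLinearMap.nonneg_iff_isPositive]
  constructor
  · have : IsSelfAdjoint (adjoint T * T) := by
      simpa [ContinuousLinearMap.star_eq_adjoint] using IsSelfAdjoint.star_mul_self T
    exact ((IsSelfAdjoint.one (H →L[ℂ] H)).sub this).isSymmetric
  · intro x
    have h1 : ContinuousLinearMap.reApplyInnerSelf (1 - adjoint T * T) x
        = ‖x‖ ^ 2 - ‖T x‖ ^ 2 := by
      simp only [ContinuousLinearMap.reApplyInnerSelf_apply,
        ContinuousLinearMap.sub_apply, ContinuousLinearMap.one_apply, inner_sub_left,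
        ContinuousLinearMap.mul_apply]
      rw [ContinuousLinearMap.adjoint_inner_left]
      have e1 : ((inner ℂ x x : ℂ)).re = ‖x‖ ^ 2 := by
        simpa using inner_self_eq_norm_sq (𝕜 := ℂ) x
      have e2 : ((inner ℂ (T x) (T x) : ℂ)).re = ‖T x‖ ^ 2 := by
        simpa using inner_self_eq_norm_sq (𝕜 := ℂ) (T x)
      simp [e1, e2, ← Complex.ofReal_pow]
    rw [h1]
    have h2 : ‖T x‖ ≤ ‖x‖ := by
      calc ‖T x‖ ≤ ‖T‖ * ‖x‖ := T.le_opNorm x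
      _ ≤ 1 * ‖x‖ := by gcongr
      _ = ‖x‖ := one_mul _
    nlinarith [norm_nonneg (T x), norm_nonneg x]

/-- the key identity for the defect operator of a contraction -/
lemma sznagy_key (T : H →L[ℂ] H) (hT : ‖T‖ ≤ 1) (x : H) :
    (inner ℂ (T x) (T x) : ℂ)
      + inner ℂ (CFC.sqrt (1 - adjoint T * T) x) (CFC.sqrt (1 - adjoint T * T) x)
      = inner ℂ x x := by
  set A : H →L[ℂ] H := 1 - adjoint T * T with hA
  have hA_nonneg : (0 : H →L[ℂ] H) ≤ A := sznagy_defect_nonneg T hT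
  set D : H →L[ℂ] H := CFC.sqrt A with hD
  have hD_nonneg : (0 : H →L[ℂ] H) ≤ D := CFC.sqrt_nonneg _
  have hD_adj : adjoint D = D :=
    ContinuousLinearMap.isSelfAdjoint_iff'.mp hD_nonneg.isSelfAdjoint
  have hD_sq : D * D = A := CFC.sqrt_mul_sqrt_self A hA_nonneg
  have h1 : (inner ℂ (D x) (D x) : ℂ) = inner ℂ ((D * D) x) x := by
    rw [ContinuousLinearMap.mul_apply,
      ← ContinuousLinearMap.adjoint_inner_right D (D x) x, hD_adj]
  rw [h1, hD_sq, hA]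
  simp only [ContinuousLinearMap.sub_apply, ContinuousLinearMap.one_apply,
    ContinuousLinearMap.mul_apply, inner_sub_left]
  rw [ContinuousLinearMap.adjoint_inner_left]
  ring

/-- the sequence space function underlying the isometric coextension -/
def sznagyFun (T D : H →L[ℂ] H) (f : ℕ → H) : ℕ → H
  | 0 => T (f 0)
  | 1 => D (f 0)
  | (n + 2) => f (n + 1)

lemma sznagy_memℓp (T D : H →L[ℂ] H) (f : lp (fun _ : ℕ => H) 2) :
    Memℓp (sznagyFun T D f) 2 := by
  apply memℓp_gen
  have hq : 0 < (2 : ENNReal).toReal := by norm_num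
  have hf : Summable fun n : ℕ => ‖(f : ∀ _ : ℕ, H) n‖ ^ (2 : ENNReal).toReal :=
    (lp.memℓp f).summable hq
  have h2 : Summable fun n : ℕ =>
      ‖sznagyFun T D (f : ∀ _ : ℕ, H) (n + 2)‖ ^ (2 : ENNReal).toReal := by
    have he : (fun n : ℕ => ‖sznagyFun T D (f : ∀ _ : ℕ, H) (n + 2)‖ ^ (2 : ENNReal).toReal)
        = fun n : ℕ => ‖(f : ∀ _ : ℕ, H) (n + 1)‖ ^ (2 : ENNReal).toReal := rfl
    rw [he]
    exact (summable_nat_add_iff 1).mpr hf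
  exact (summable_nat_add_iff 2).mp h2

/-- the linear map underlying the isometric coextension -/
def sznagyVl (T D : H →L[ℂ] H) :
    lp (fun _ : ℕ => H) 2 →ₗ[ℂ] lp (fun _ : ℕ => H) 2 where
  toFun f := ⟨sznagyFun T D f, sznagy_memℓp T D f⟩
  map_add' f g := by
    apply lp.ext
    funext n
    have hfg : ∀ m : ℕ, ((f + g : lp (fun _ : ℕ => H) 2) : ∀ _ : ℕ, H) m
        = (f : ∀ _ : ℕ, H) m + (g : ∀ _ : ℕ, H) m := fun m => by
      rw [lp.coeFn_add]; rfl
    match n with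
    | 0 =>
      show T (((f + g : lp (fun _ : ℕ => H) 2) : ∀ _ : ℕ, H) 0)
        = T ((f : ∀ _ : ℕ, H) 0) + T ((g : ∀ _ : ℕ, H) 0)
      rw [hfg 0, map_add]
    | 1 =>
      show D (((f + g : lp (fun _ : ℕ => H) 2) : ∀ _ : ℕ, H) 0)
        = D ((f : ∀ _ : ℕ, H) 0) + D ((g : ∀ _ : ℕ, H) 0)
      rw [hfg 0, map_add]
    | (n + 2) =>
      show ((f + g : lp (fun _ : ℕ => H) 2) : ∀ _ : ℕ, H) (n + 1)
        = (f : ∀ _ : ℕ, H) (n + 1) + (g : ∀ _ : ℕ, H) (n + 1)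
      exact hfg (n + 1)
  map_smul' c f := by
    apply lp.ext
    funext n
    have hcf : ∀ m : ℕ, ((c • f : lp (fun _ : ℕ => H) 2) : ∀ _ : ℕ, H) m
        = c • (f : ∀ _ : ℕ, H) m := fun m => by
      rw [lp.coeFn_smul]; rfl
    match n with
    | 0 =>
      show T (((c • f : lp (fun _ : ℕ => H) 2) : ∀ _ : ℕ, H) 0)
        = c • T ((f : ∀ _ : ℕ, H) 0)
      rw [hcf 0, map_smul]
    | 1 =>
      show D (((c • f : lp (fun _ : ℕ => H) 2) : ∀ _ : ℕ, H) 0)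
        = c • D ((f : ∀ _ : ℕ, H) 0)
      rw [hcf 0, map_smul]
    | (n + 2) =>
      show ((c • f : lp (fun _ : ℕ => H) 2) : ∀ _ : ℕ, H) (n + 1)
        = c • (f : ∀ _ : ℕ, H) (n + 1)
      exact hcf (n + 1)

lemma sznagyVl_coe (T D : H →L[ℂ] H) (f : lp (fun _ : ℕ => H) 2) (n : ℕ) :
    (sznagyVl T D f : ∀ _ : ℕ, H) n = sznagyFun T D f n := rfl

/-- the embedding of `H` into `ℓ²(ℕ, H)` as a linear map -/
def sznagyJl : H →ₗ[ℂ] lp (fun _ : ℕ => H) 2 where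
  toFun x := lp.single 2 0 x
  map_add' x y := by
    apply lp.ext
    funext n
    have h : ∀ g h : lp (fun _ : ℕ => H) 2, ((g + h : lp (fun _ : ℕ => H) 2) : ∀ _ : ℕ, H) n
        = (g : ∀ _ : ℕ, H) n + (h : ∀ _ : ℕ, H) n := fun g h => by
      rw [lp.coeFn_add]; rfl
    rw [h]
    rcases n with _ | n
    · simp [lp.single_apply_self]
    · rw [lp.single_apply_ne 2 0 _ (by omega), lp.single_apply_ne 2 0 _ (by omega),
        lp.single_apply_ne 2 0 _ (by omega)]
      simp
  map_smul' c x := by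
    simpa using (lp.single_smul 2 (0 : ℕ) x c)

lemma sznagyJl_norm (x : H) : ‖(sznagyJl x : lp (fun _ : ℕ => H) 2)‖ = ‖x‖ :=
  by
  show ‖(lp.single 2 0 x : lp (fun _ : ℕ => H) 2)‖ = ‖x‖
  exact lp.norm_single (E := fun _ : ℕ => H) (p := 2) (by norm_num) 0 x

end SzNagyAux

set_option maxHeartbeats 1000000 in
/-- Sz.-Nagy dilation (coextension form): every contraction `T` on a Hilbert space `H`
admits an isometric coextension `V` on a larger Hilbert space `K` (with isometric embedding
`J`), i.e. `H` is coinvariant (`V* J = J T*`) and `J* Vⁿ J = Tⁿ` for all `n ≥ 0`. -/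
theorem stmt_12 {H : Type u} [NormedAddCommGroup H] [InnerProductSpace ℂ H] [CompleteSpace H]
    (T : H →L[ℂ] H) (hT : ‖T‖ ≤ 1) :
    ∃ (K : Type u) (_ : NormedAddCommGroup K) (_ : InnerProductSpace ℂ K)
      (_ : CompleteSpace K) (J : H →L[ℂ] K) (V : K →L[ℂ] K),
      (∀ x : H, ‖J x‖ = ‖x‖) ∧ (∀ y : K, ‖V y‖ = ‖y‖) ∧
      ContinuousLinearMap.adjoint V ∘L J = J ∘L ContinuousLinearMap.adjoint T ∧
      ∀ n : ℕ, ContinuousLinearMap.adjoint J ∘L (V ^ n) ∘L J = T ^ n := by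
  classical
  set D : H →L[ℂ] H := CFC.sqrt (1 - adjoint T * T) with hDdef
  have key : ∀ x : H, (inner ℂ (T x) (T x) : ℂ) + inner ℂ (D x) (D x) = inner ℂ x x :=
    fun x => sznagy_key T hT x
  -- V preserves inner products of a vector with itself
  have hVinner : ∀ f : lp (fun _ : ℕ => H) 2,
      (inner ℂ (sznagyVl T D f) (sznagyVl T D f) : ℂ) = inner ℂ f f := by
    intro f
    have hsum : Summable fun n : ℕ =>
        (inner ℂ ((sznagyVl T D f : ∀ _ : ℕ, H) n) ((sznagyVl T D f : ∀ _ : ℕ, H) n) : ℂ) :=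
      lp.summable_inner (sznagyVl T D f) (sznagyVl T D f)
    have hsumf : Summable fun n : ℕ =>
        (inner ℂ ((f : ∀ _ : ℕ, H) n) ((f : ∀ _ : ℕ, H) n) : ℂ) :=
      lp.summable_inner f f
    rw [lp.inner_eq_tsum, lp.inner_eq_tsum]
    rw [Summable.tsum_eq_zero_add hsum, Summable.tsum_eq_zero_add ((summable_nat_add_iff 1).mpr hsum),
      Summable.tsum_eq_zero_add hsumf]
    have e0 : (sznagyVl T D f : ∀ _ : ℕ, H) 0 = T ((f : ∀ _ : ℕ, H) 0) := rfl
    have e1 : (sznagyVl T D f : ∀ _ : ℕ, H) (0 + 1) = D ((f : ∀ _ : ℕ, H) 0) := rfl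
    have e2 : ∀ n : ℕ, (sznagyVl T D f : ∀ _ : ℕ, H) (n + 1 + 1)
        = (f : ∀ _ : ℕ, H) (n + 1) := fun n => rfl
    simp only [e0, e1, e2]
    have hk := key ((f : ∀ _ : ℕ, H) 0)
    linear_combination hk
  -- V preserves norms
  have hVnorm : ∀ f : lp (fun _ : ℕ => H) 2, ‖sznagyVl T D f‖ = ‖f‖ := by
    intro f
    have h1 := congrArg Complex.re (hVinner f)
    have e1 : ((inner ℂ (sznagyVl T D f) (sznagyVl T D f) : ℂ)).re = ‖sznagyVl T D f‖ ^ 2 := by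
      simpa using inner_self_eq_norm_sq (𝕜 := ℂ) (sznagyVl T D f)
    have e2 : ((inner ℂ f f : ℂ)).re = ‖f‖ ^ 2 := by
      simpa using inner_self_eq_norm_sq (𝕜 := ℂ) f
    rw [e1, e2] at h1
    nlinarith [norm_nonneg (sznagyVl T D f), norm_nonneg f]
  let Viso : lp (fun _ : ℕ => H) 2 →ₗᵢ[ℂ] lp (fun _ : ℕ => H) 2 := ⟨sznagyVl T D, hVnorm⟩
  let V : lp (fun _ : ℕ => H) 2 →L[ℂ] lp (fun _ : ℕ => H) 2 := Viso.toContinuousLinearMap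
  let Jiso : H →ₗᵢ[ℂ] lp (fun _ : ℕ => H) 2 := ⟨sznagyJl, sznagyJl_norm⟩
  let J : H →L[ℂ] lp (fun _ : ℕ => H) 2 := Jiso.toContinuousLinearMap
  have hJapp : ∀ x : H, (J x : lp (fun _ : ℕ => H) 2) = lp.single 2 0 x := fun x => rfl
  have hVapp : ∀ f : lp (fun _ : ℕ => H) 2, (V f : lp (fun _ : ℕ => H) 2) = sznagyVl T D f :=
    fun f => rfl
  -- coinvariance : V* J = J T*
  have hco : adjoint V ∘L J = J ∘L adjoint T := by
    refine ContinuousLinearMap.ext fun x => ?_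
    apply ext_inner_right ℂ
    intro g
    rw [ContinuousLinearMap.comp_apply, ContinuousLinearMap.comp_apply,
      ContinuousLinearMap.adjoint_inner_left]
    have hL : (inner ℂ (J x) (V g) : ℂ) = inner ℂ x (T ((g : ∀ _ : ℕ, H) 0)) := by
      rw [hJapp, hVapp, lp.inner_single_left]
      rfl
    have hR : (inner ℂ (J (adjoint T x)) g : ℂ) = inner ℂ (adjoint T x) ((g : ∀ _ : ℕ, H) 0) := by
      rw [hJapp, lp.inner_single_left]
    rw [hL, hR, ContinuousLinearMap.adjoint_inner_left]
  -- J* J = 1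
  have hJJ : adjoint J ∘L J = 1 := by
    refine ContinuousLinearMap.ext fun x => ?_
    apply ext_inner_right ℂ
    intro y
    rw [ContinuousLinearMap.comp_apply, ContinuousLinearMap.adjoint_inner_left,
      ContinuousLinearMap.one_apply]
    rw [hJapp, lp.inner_single_left, hJapp, lp.single_apply_self]
  -- J* V = T J*
  have hJV : adjoint J ∘L V = T ∘L adjoint J := by
    have h := congrArg ContinuousLinearMap.adjoint hco
    rw [ContinuousLinearMap.adjoint_comp, ContinuousLinearMap.adjoint_comp,
      ContinuousLinearMap.adjoint_adjoint, ContinuousLinearMap.adjoint_adjoint] at h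
    exact h
  refine ⟨lp (fun _ : ℕ => H) 2, inferInstance, inferInstance, inferInstance, J, V,
    sznagyJl_norm, hVnorm, hco, ?_⟩
  intro n
  induction n with
  | zero => simpa [ContinuousLinearMap.one_def] using hJJ
  | succ n ih =>
    rw [pow_succ' V n, pow_succ' T n]
    calc adjoint J ∘L (V * V ^ n) ∘L J
        = (adjoint J ∘L V) ∘L ((V ^ n) ∘L J) := by
          rw [ContinuousLinearMap.mul_def]
          refine ContinuousLinearMap.ext fun x => ?_; rfl
      _ = (T ∘L adjoint J) ∘L ((V ^ n) ∘L J) := by rw [hJV]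
      _ = T ∘L (adjoint J ∘L (V ^ n) ∘L J) := by
          refine ContinuousLinearMap.ext fun x => ?_; rfl
      _ = T ∘L T ^ n := by rw [ih]
      _ = T * T ^ n := by rw [ContinuousLinearMap.mul_def]
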